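/- Let p be a prime, a, b ≥ 0, k ≥ 1. Then D'_{2k}·Σ_{j=0}^{p^b - 1} Σ_{s=0}^{p^a - 1} j·(s + j·p^a)^{2k-1} ≡ 0 (mod p^{a+b}). -/

import Mathlib

section VanishHelpers

open Finset

noncomputable def Pv (p : ℕ) [Fact p.Prime] (e : ℤ) (x : ℚ_[p]) : Prop := ‖x‖ ≤ (p:ℝ)^(-e)

variable {p : ℕ} [hp : Fact p.Prime]

lemma one_lt_pR : (1:ℝ) < p := by exact_mod_cast hp.out.one_lt

lemma pR_pos : (0:ℝ) < p := lt_trans one_pos one_lt_pR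

lemma Pv.mono {e e' : ℤ} {x : ℚ_[p]} (h : e' ≤ e) (hx : Pv p e x) : Pv p e' x :=
  le_trans hx (zpow_le_zpow_right₀ (le_of_lt one_lt_pR) (by omega))

lemma Pv.mul {e f : ℤ} {x y : ℚ_[p]} (hx : Pv p e x) (hy : Pv p f y) : Pv p (e + f) (x * y) := by
  unfold Pv at *
  rw [norm_mul, neg_add, zpow_add₀ (ne_of_gt pR_pos)]
  exact mul_le_mul hx hy (norm_nonneg _) (zpow_nonneg (le_of_lt pR_pos) _)

lemma Pv.add {e : ℤ} {x y : ℚ_[p]} (hx : Pv p e x) (hy : Pv p e y) : Pv p e (x + y) :=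
  le_trans (Padic.nonarchimedean x y) (max_le hx hy)

lemma Pv.neg {e : ℤ} {x : ℚ_[p]} (hx : Pv p e x) : Pv p e (-x) := by
  unfold Pv at *; rwa [norm_neg]

lemma Pv.sub {e : ℤ} {x y : ℚ_[p]} (hx : Pv p e x) (hy : Pv p e y) : Pv p e (x - y) := by
  rw [sub_eq_add_neg]; exact hx.add hy.neg

lemma Pv.zero {e : ℤ} : Pv p e (0 : ℚ_[p]) := by
  unfold Pv; rw [norm_zero]; positivity

lemma Pv.sum {e : ℤ} {ι : Type*} {s : Finset ι} {f : ι → ℚ_[p]}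
    (h : ∀ i ∈ s, Pv p e (f i)) : Pv p e (∑ i ∈ s, f i) := by
  classical
  induction s using Finset.induction_on with
  | empty => simpa using Pv.zero
  | insert _ _ hni ih =>
    rename_i a s
    rw [Finset.sum_insert hni]
    exact (h a (mem_insert_self a s)).add (ih fun i hi => h i (mem_insert_of_mem hi))

lemma Pv.intCast (n : ℤ) : Pv p 0 (n : ℚ_[p]) := by
  unfold Pv; simpa using Padic.norm_int_le_one n

lemma Pv.natCast (n : ℕ) : Pv p 0 (n : ℚ_[p]) := by
  have := Pv.intCast (p := p) n; push_cast at this; exact this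

lemma Pv.one : Pv p 0 (1 : ℚ_[p]) := by simpa using Pv.natCast 1

lemma Pv.ppow (c : ℕ) : Pv p c ((p:ℚ_[p])^c) := by
  unfold Pv; rw [Padic.norm_p_pow]

lemma Pv.p' : Pv p 1 ((p:ℚ_[p])) := by simpa using Pv.ppow 1

lemma Pv.of_mul_p {e : ℤ} {x : ℚ_[p]} (h : Pv p e (x * (p:ℚ_[p]))) : Pv p (e - 1) x := by
  unfold Pv at *
  rw [norm_mul, Padic.norm_p] at h
  rw [show -(e-1) = -e + 1 by ring, zpow_add₀ (ne_of_gt pR_pos), zpow_one]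
  calc ‖x‖ = ‖x‖ * (p:ℝ)⁻¹ * p := by rw [mul_assoc, inv_mul_cancel₀ (ne_of_gt pR_pos), mul_one]
  _ ≤ (p:ℝ)^(-e) * p := by
      apply mul_le_mul_of_nonneg_right h (le_of_lt pR_pos)

lemma Pv.norm_nat_eq {r : ℕ} (hr : 0 < r) :
    ‖(r : ℚ_[p])‖ = (p:ℝ)^(-(padicValNat p r : ℤ)) := by
  have : ((r:ℚ) : ℚ_[p]) = (r : ℚ_[p]) := by push_cast; rfl
  rw [← this, Padic.eq_padicNorm,
    padicNorm.eq_zpow_of_nonzero (by exact_mod_cast hr.ne' : (r:ℚ) ≠ 0)]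
  rw [← padicValRat_of_nat]
  push_cast
  rfl

lemma Pv.inv_nat {r t : ℕ} (hr : 0 < r) (h : r < p^t) : Pv p (-(t:ℤ)+1) ((r : ℚ_[p])⁻¹) := by
  have hv : padicValNat p r < t := by
    by_contra hc
    push_neg at hc
    have h1 : p ^ t ∣ r := dvd_trans (pow_dvd_pow p hc) pow_padicValNat_dvd
    have := Nat.le_of_dvd hr h1
    omega
  unfold Pv
  rw [norm_inv, Pv.norm_nat_eq hr, ← zpow_neg]
  apply zpow_le_zpow_right₀ (le_of_lt one_lt_pR)
  omega

noncomputable def Bp (p : ℕ) [Fact p.Prime] (n : ℕ) : ℚ_[p] := ((bernoulli n : ℚ) : ℚ_[p])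

variable {p : ℕ} [hp : Fact p.Prime]

lemma nat_choose_id (m i : ℕ) (h : i ≤ m) :
    (m + 1 - i) * (m+1).choose i = (m+1) * m.choose i := by
  have h1 := Nat.add_one_mul_choose_eq m (m - i)
  rw [Nat.choose_symm h] at h1
  have h2 : m - i + 1 = m + 1 - i := by omega
  rw [h2] at h1
  rw [show m.succ.choose (m+1-i) = (m+1).choose (m+1-i) from rfl] at h1
  rw [Nat.choose_symm (by omega : i ≤ m + 1)] at h1
  rw [mul_comm]
  exact h1.symm

lemma choose_div_cast (m i : ℕ) (h : i ≤ m) :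
    (((m+1).choose i : ℚ_[p])) / ((m:ℚ_[p])+1) = (m.choose i : ℚ_[p]) / ((m+1-i : ℕ) : ℚ_[p]) := by
  have h1 := nat_choose_id m i h
  have hm1 : ((m:ℚ_[p]) + 1) ≠ 0 := by
    have : ((m+1 : ℕ) : ℚ_[p]) ≠ 0 := Nat.cast_ne_zero.mpr (by omega)
    push_cast at this; exact this
  have hmi : ((m + 1 - i : ℕ) : ℚ_[p]) ≠ 0 := Nat.cast_ne_zero.mpr (by omega)
  rw [div_eq_div_iff hm1 hmi]
  have := congrArg (Nat.cast : ℕ → ℚ_[p]) h1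
  push_cast at this ⊢
  linear_combination this

lemma div_congr_aux (B N c1 c2 d1 d2 : ℚ_[p]) (h : c1/d1 = c2/d2) :
    B * c1 * N / d1 = B * c2 * N / d2 := by
  rw [mul_assoc, mul_div_assoc, mul_div_right_comm c1 N d1, h, ← mul_div_right_comm, ← mul_div_assoc, ← mul_assoc]

lemma faulhaber_p (n q : ℕ) : (∑ x ∈ range n, (x:ℚ_[p])^q) =
    ∑ i ∈ range (q+1), Bp p i * (q.choose i : ℚ_[p]) * (n:ℚ_[p])^(q+1-i) / ((q+1-i : ℕ) : ℚ_[p]) := by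
  have h := congrArg (fun x : ℚ => (x : ℚ_[p])) (sum_range_pow n q)
  push_cast at h
  rw [h]
  apply Finset.sum_congr rfl
  intro i hi
  have hiq : i ≤ q := Nat.lt_succ_iff.mp (Finset.mem_range.mp hi)
  exact div_congr_aux _ _ _ _ _ _ (choose_div_cast q i hiq)

variable {p : ℕ} [hp : Fact p.Prime]

lemma Pv.cast_pow_nat (x e : ℕ) : Pv p 0 ((x:ℚ_[p])^e) := by
  have := Pv.natCast (p := p) (x^e)
  push_cast at this
  exact this

lemma Pv.div {e f : ℤ} {x y : ℚ_[p]} (hx : Pv p e x) (hy : Pv p f y⁻¹) : Pv p (e + f) (x / y) := by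
  rw [div_eq_mul_inv]; exact hx.mul hy

lemma term_pv0 (q i : ℕ) (hb : Pv p (-1) (Bp p i)) (hi : i ≤ q) (c : ℕ) (n : ℕ) :
    Pv p ((c:ℤ)*((q+1-i : ℕ):ℤ) - ((q+1-i : ℕ):ℤ))
      (Bp p i * (n : ℚ_[p]) * ((p:ℚ_[p])^c)^(q+1-i) / ((q+1-i : ℕ) : ℚ_[p])) := by
  have hr : 0 < q + 1 - i := by omega
  have hlt : q + 1 - i < p^(q+1-i) := Nat.lt_pow_self hp.out.one_lt
  have h1 : Pv p (c*(q+1-i) : ℕ) (((p:ℚ_[p])^c)^(q+1-i)) := by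
    have := Pv.ppow (p := p) (c*(q+1-i))
    rwa [pow_mul] at this
  have h2 := ((hb.mul (Pv.natCast n)).mul h1).div (Pv.inv_nat hr hlt)
  apply h2.mono
  apply le_of_eq
  push_cast
  ring

lemma bern_pv (n : ℕ) : Pv p (-1) (Bp p n) := by
  induction n using Nat.strong_induction_on with
  | _ n ih =>
  rcases Nat.eq_zero_or_pos n with h0 | h0
  · subst h0
    have hB : Bp p 0 = 1 := by simp [Bp]
    rw [hB]
    exact Pv.one.mono (by omega)
  · have hf := faulhaber_p (p := p) p n
    rw [Finset.sum_range_succ] at hf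
    have e1 : n + 1 - n = 1 := by omega
    rw [e1, Nat.choose_self, pow_one, Nat.cast_one, div_one, mul_one] at hf
    have key : Bp p n * (p:ℚ_[p]) =
        (∑ x ∈ range p, (x:ℚ_[p])^n) - ∑ i ∈ range n, Bp p i * (n.choose i : ℚ_[p]) * (p:ℚ_[p])^(n+1-i) / ((n+1-i : ℕ) : ℚ_[p]) := by
      rw [hf]; ring
    have hPv : Pv p 0 (Bp p n * (p:ℚ_[p])) := by
      rw [key]
      apply Pv.sub
      · exact Pv.sum (fun x _ => Pv.cast_pow_nat x n)
      · apply Pv.sum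
        intro i hi
        have hin : i ≤ n := le_of_lt (Finset.mem_range.mp hi)
        have ht := term_pv0 n i (ih i (Finset.mem_range.mp hi)) hin 1 (n.choose i)
        rw [pow_one] at ht
        exact ht.mono (by push_cast; nlinarith)
    have := hPv.of_mul_p
    simpa using this

variable {p : ℕ} [hp : Fact p.Prime]

lemma lt_two_pow_pred' : ∀ r : ℕ, r + 3 < 2^(r+2) := by
  intro r
  induction r with
  | zero => norm_num
  | succ n ihn => rw [pow_succ]; omega

lemma lt_two_pow_pred (r : ℕ) (h : 3 ≤ r) : r < 2^(r-1) := by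
  have := lt_two_pow_pred' (r - 3)
  have e : r - 3 + 2 = r - 1 := by omega
  rw [e] at this
  omega
lemma bern_two : (bernoulli 2 : ℚ) = 1/6 := by
  rw [bernoulli_eq_bernoulli'_of_ne_one (by norm_num), bernoulli'_two]

lemma norm_nat_eq_one_of_not_dvd {n : ℕ} (h : ¬ (p ∣ n)) : ‖(n : ℚ_[p])‖ = 1 := by
  have h1 : ‖((n:ℤ) : ℚ_[p])‖ ≤ 1 := Padic.norm_int_le_one n
  have h2 : ¬ ‖((n:ℤ) : ℚ_[p])‖ < 1 := by
    rw [Padic.norm_intCast_lt_one_iff]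
    exact_mod_cast h
  push_cast at h1 h2
  linarith [lt_or_eq_of_le h1]

lemma six_eq : (6:ℚ_[p]) = (2:ℕ) * (3:ℕ) := by norm_num

lemma norm_six (h23 : p = 2 ∨ p = 3) : ‖(6 : ℚ_[p])‖ = (p:ℝ)⁻¹ := by
  rw [six_eq, norm_mul]
  rcases h23 with h | h
  · subst h
    rw [Padic.norm_p, norm_nat_eq_one_of_not_dvd (by norm_num), mul_one]
  · subst h
    rw [Padic.norm_p, norm_nat_eq_one_of_not_dvd (by norm_num), one_mul]

lemma pinv_lt_one : ((p:ℝ))⁻¹ < 1 := by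
  rw [inv_lt_one_iff₀]
  right
  exact one_lt_pR

lemma Pv.one_norm {x : ℚ_[p]} (h : Pv p 1 x) : ‖x‖ ≤ (p:ℝ)⁻¹ := by
  unfold Pv at h
  rwa [zpow_neg, zpow_one] at h

lemma bern_norm_23 {k : ℕ} (hk : 1 ≤ k) (h23 : p = 2 ∨ p = 3) : ‖Bp p (2*k)‖ = p := by
  rcases Nat.lt_or_ge k 2 with hk2 | hk2
  · -- k = 1
    have hk1 : k = 1 := by omega
    subst hk1
    have : Bp p 2 = (6:ℚ_[p])⁻¹ := by
      rw [Bp, bern_two]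
      push_cast
      norm_num
    rw [(by norm_num : (2*1:ℕ) = 2), this, norm_inv, norm_six h23, inv_inv]
  · -- k ≥ 2
    have hf := faulhaber_p (p := p) p (2*k)
    rw [Finset.sum_range_succ] at hf
    have e1 : 2*k + 1 - 2*k = 1 := by omega
    rw [e1, Nat.choose_self, pow_one, Nat.cast_one, div_one, mul_one] at hf
    have key : Bp p (2*k) * (p:ℚ_[p]) =
        (∑ x ∈ range p, (x:ℚ_[p])^(2*k)) - ∑ i ∈ range (2*k), Bp p i * ((2*k).choose i : ℚ_[p]) * (p:ℚ_[p])^(2*k+1-i) / ((2*k+1-i : ℕ) : ℚ_[p]) := by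
      rw [hf]; ring
    have hSig : Pv p 1 (∑ i ∈ range (2*k), Bp p i * ((2*k).choose i : ℚ_[p]) * (p:ℚ_[p])^(2*k+1-i) / ((2*k+1-i : ℕ) : ℚ_[p])) := by
      apply Pv.sum
      intro i hi
      have hik : i < 2*k := Finset.mem_range.mp hi
      by_cases h : i = 2*k-1
      · -- i = 2k - 1, odd ≥ 3 : bernoulli = 0
        have hodd : Odd i := by rw [h]; exact ⟨k-1, by omega⟩
        have h1 : 1 < i := by omega
        have : Bp p i = 0 := by
          rw [Bp, bernoulli_eq_bernoulli'_of_ne_one (by omega), bernoulli'_eq_zero_of_odd hodd h1]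
          norm_num
        rw [this]
        simpa using (Pv.zero (p := p) (e := 1))
      · -- r = 2k+1-i ≥ 3
        set r := 2*k + 1 - i with hr
        have hr3 : 3 ≤ r := by omega
        have hlt : r < p^(r-1) := by
          calc r < 2^(r-1) := lt_two_pow_pred r hr3
          _ ≤ p^(r-1) := Nat.pow_le_pow_left hp.out.two_le _
        have hinv := Pv.inv_nat (p := p) (by omega : 0 < r) hlt
        have h2 := (((bern_pv i).mul (Pv.natCast ((2*k).choose i))).mul (Pv.ppow (p := p) r)).div hinv
        apply h2.mono
        push_cast [Nat.cast_sub (show 1 ≤ r by omega)]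
        omega
    have hS : ‖∑ x ∈ range p, (x:ℚ_[p])^(2*k)‖ = 1 := by
      rcases h23 with h | h
      · subst h
        have hv : (∑ x ∈ range 2, (x:ℚ_[(2:ℕ)])^(2*k)) = 1 := by
          simp [Finset.sum_range_succ, zero_pow (by omega : 2*k ≠ 0)]
        rw [hv, norm_one]
      · subst h
        have hv : (∑ x ∈ range 3, (x:ℚ_[(3:ℕ)])^(2*k)) = ((1 + 2^(2*k) : ℕ) : ℚ_[(3:ℕ)]) := by
          simp [Finset.sum_range_succ, zero_pow (by omega : 2*k ≠ 0)]
          try push_cast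
          try ring
        rw [hv]
        apply norm_nat_eq_one_of_not_dvd
        have hm : 2^(2*k) % 3 = 1 := by
          rw [pow_mul, Nat.pow_mod]
          norm_num
        omega
    have hne : ‖∑ x ∈ range p, (x:ℚ_[p])^(2*k)‖ ≠ ‖-∑ i ∈ range (2*k), Bp p i * ((2*k).choose i : ℚ_[p]) * (p:ℚ_[p])^(2*k+1-i) / ((2*k+1-i : ℕ) : ℚ_[p])‖ := by
      rw [hS, norm_neg]
      have := hSig.one_norm
      have h1 := pinv_lt_one (p := p)
      intro hc
      rw [← hc] at this
      linarith
    have hmax : ‖Bp p (2*k) * (p:ℚ_[p])‖ = 1 := by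
      rw [key, sub_eq_add_neg, Padic.add_eq_max_of_ne hne, hS, norm_neg,
        max_eq_left (le_trans hSig.one_norm (le_of_lt (pinv_lt_one (p := p))))]
    rw [norm_mul, Padic.norm_p] at hmax
    have hppos := pR_pos (p := p)
    field_simp at hmax
    linarith

variable {p : ℕ} [hp : Fact p.Prime]

lemma Dprime_bern_eq (k : ℕ) (hk : 1 ≤ k) :
    (((bernoulli (2*k) / (2*k : ℚ)).den : ℚ) * bernoulli (2*k))
      = ((bernoulli (2*k) / (2*k : ℚ)).num : ℚ) * ((2*k : ℕ) : ℚ) := by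
  have h2k : ((2*k : ℚ)) ≠ 0 := by
    have : (0:ℚ) < 2*k := by
      have : (1:ℚ) ≤ k := by exact_mod_cast hk
      linarith
    exact ne_of_gt this
  have h := Rat.mul_den_eq_num (bernoulli (2*k) / (2*k : ℚ))
  have hq : (bernoulli (2*k) / (2*k:ℚ)) * (2*k:ℚ) = bernoulli (2*k) := div_mul_cancel₀ _ h2k
  push_cast
  linear_combination (2*(k:ℚ)) * h - ((bernoulli (2*k) / (2*k : ℚ)).den : ℚ) * hq

lemma pv_D'_bern (k : ℕ) (hk : 1 ≤ k) :
    Pv p 0 ((((bernoulli (2*k) / (2*k : ℚ)).den : ℕ) : ℚ_[p]) * Bp p (2*k)) := by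
  have h := congrArg (fun x : ℚ => (x : ℚ_[p])) (Dprime_bern_eq k hk)
  push_cast at h
  rw [Bp]
  push_cast
  rw [h]
  have h1 := Pv.intCast (p := p) (bernoulli (2*k) / (2*k : ℚ)).num
  have h2 := Pv.natCast (p := p) (2*k)
  have := h1.mul h2
  push_cast at this
  simpa using this

lemma pv_D'_23 (k : ℕ) (hk : 1 ≤ k) (h23 : p = 2 ∨ p = 3) :
    Pv p (if p = 2 then 2 else 1) ((((bernoulli (2*k) / (2*k : ℚ)).den : ℕ) : ℚ_[p])) := by
  have hB := bern_norm_23 (p := p) hk h23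
  have h := congrArg (fun x : ℚ => (x : ℚ_[p])) (Dprime_bern_eq k hk)
  push_cast at h
  have hnorm : ‖(((bernoulli (2*k) / (2*k : ℚ)).den : ℕ) : ℚ_[p])‖ * (p:ℝ)
      = ‖((bernoulli (2*k) / (2*k : ℚ)).num : ℚ_[p])‖ * ‖(2:ℚ_[p])‖ * ‖(k:ℚ_[p])‖ := by
    rw [← hB, ← norm_mul]
    rw [show (((bernoulli (2*k) / (2*k : ℚ)).den : ℕ) : ℚ_[p]) * Bp p (2*k)
        = ((bernoulli (2*k) / (2*k : ℚ)).num : ℚ_[p]) * (2 * (k:ℚ_[p])) by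
      rw [Bp]; push_cast; linear_combination h]
    rw [norm_mul, norm_mul]
    push_cast
    ring
  have hnum : ‖((bernoulli (2*k) / (2*k : ℚ)).num : ℚ_[p])‖ ≤ 1 := by
    have := Pv.intCast (p := p) (bernoulli (2*k) / (2*k : ℚ)).num
    unfold Pv at this
    simpa using this
  have hkn : ‖(k:ℚ_[p])‖ ≤ 1 := by
    have := Pv.natCast (p := p) k
    unfold Pv at this
    simpa using this
  have hppos := pR_pos (p := p)
  unfold Pv
  rcases h23 with h2 | h3
  · subst h2
    rw [if_pos rfl]
    have h2n : ‖(2:ℚ_[(2:ℕ)])‖ = ((2:ℕ):ℝ)⁻¹ := by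
      have := Padic.norm_p (p := 2)
      push_cast at this ⊢
      exact this
    rw [h2n] at hnorm
    have hprod : ‖((bernoulli (2*k) / (2*k : ℚ)).num : ℚ_[(2:ℕ)])‖ * ((2:ℕ):ℝ)⁻¹ * ‖(k:ℚ_[(2:ℕ)])‖ ≤ 1 * ((2:ℕ):ℝ)⁻¹ * 1 := by
      apply mul_le_mul (mul_le_mul hnum (le_refl _) (by positivity) (by norm_num)) hkn (norm_nonneg _)
      positivity
    have hfin : ‖(((bernoulli (2*k) / (2*k : ℚ)).den : ℕ) : ℚ_[(2:ℕ)])‖ * ((2:ℕ):ℝ) ≤ 1/2 := by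
      rw [hnorm]
      calc ‖((bernoulli (2*k) / (2*k : ℚ)).num : ℚ_[(2:ℕ)])‖ * ((2:ℕ):ℝ)⁻¹ * ‖(k:ℚ_[(2:ℕ)])‖
          ≤ 1 * ((2:ℕ):ℝ)⁻¹ * 1 := hprod
        _ = 1/2 := by norm_num
    have he : ((2:ℕ):ℝ) ^ (-2 : ℤ) = (1/4 : ℝ) := by norm_num
    rw [he]
    push_cast at hfin
    linarith
  · subst h3
    rw [if_neg (by norm_num)]
    have h2n : ‖(2:ℚ_[(3:ℕ)])‖ ≤ 1 := by
      have := Pv.natCast (p := 3) 2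
      unfold Pv at this
      push_cast at this ⊢
      simpa using this
    have hprod : ‖((bernoulli (2*k) / (2*k : ℚ)).num : ℚ_[(3:ℕ)])‖ * ‖(2:ℚ_[(3:ℕ)])‖ * ‖(k:ℚ_[(3:ℕ)])‖ ≤ 1 :=
      mul_le_one₀ (mul_le_one₀ hnum (norm_nonneg _) h2n) (norm_nonneg _) hkn
    have h3 : ‖(((bernoulli (2*k) / (2*k : ℚ)).den : ℕ) : ℚ_[(3:ℕ)])‖ * 3 ≤ 1 := by
      push_cast at hnorm
      rw [hnorm]
      exact hprod
    norm_num
    linarith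

variable {p : ℕ} [hp : Fact p.Prime]

lemma lt_3pow' : ∀ r : ℕ, r + 2 < 3^(r+1) := by
  intro r
  induction r with
  | zero => norm_num
  | succ n ihn => rw [pow_succ]; omega

lemma lt_3pow (r : ℕ) (h : 2 ≤ r) : r < 3^(r-1) := by
  have := lt_3pow' (r-2)
  have e : r - 2 + 1 = r - 1 := by omega
  rw [e] at this
  omega

lemma lt_5pow' : ∀ r : ℕ, r + 3 < 5^(r+1) := by
  intro r
  induction r with
  | zero => norm_num
  | succ n ihn => rw [pow_succ]; omega

lemma lt_5pow (r : ℕ) (h : 3 ≤ r) : r < 5^(r-2) := by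
  have := lt_5pow' (r-3)
  have e : r - 3 + 1 = r - 2 := by omega
  rw [e] at this
  omega

lemma prime_ge5 (h2 : p ≠ 2) (h3 : p ≠ 3) : 5 ≤ p := by
  have h1 := hp.out.two_le
  rcases Nat.lt_or_ge p 5 with h | h
  · interval_cases p
    · exact absurd rfl h2
    · exact absurd rfl h3
    · exact absurd hp.out (by norm_num)
  · exact h

lemma pv_inv_r1 (r : ℕ) (hr : 1 ≤ r) : Pv p (-(r:ℤ)+1) ((r:ℚ_[p])⁻¹) :=
  Pv.inv_nat hr (Nat.lt_pow_self hp.out.one_lt)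

lemma pv_inv_r2 (r : ℕ) (hr : 2 ≤ r) (hp3 : 3 ≤ p) : Pv p (-(r:ℤ)+2) ((r:ℚ_[p])⁻¹) := by
  have h1 : r < p^(r-1) := lt_of_lt_of_le (lt_3pow r hr) (Nat.pow_le_pow_left hp3 _)
  have := Pv.inv_nat (by omega : 0 < r) h1
  apply this.mono
  push_cast [Nat.cast_sub (show 1 ≤ r by omega)]
  omega

lemma pv_inv_r3 (r : ℕ) (hr : 3 ≤ r) (hp5 : 5 ≤ p) : Pv p (-(r:ℤ)+3) ((r:ℚ_[p])⁻¹) := by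
  have h1 : r < p^(r-2) := lt_of_lt_of_le (lt_5pow r hr) (Nat.pow_le_pow_left hp5 _)
  have := Pv.inv_nat (by omega : 0 < r) h1
  apply this.mono
  push_cast [Nat.cast_sub (show 2 ≤ r by omega)]
  omega

lemma pv_inv_two (h2 : p ≠ 2) : Pv p 0 ((2:ℚ_[p])⁻¹) := by
  unfold Pv
  rw [norm_inv]
  have : ‖((2:ℕ):ℚ_[p])‖ = 1 := norm_nat_eq_one_of_not_dvd (by
    intro hd
    have := Nat.le_of_dvd (by norm_num) hd
    have h1 := hp.out.two_le
    interval_cases p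
    · exact h2 rfl)
  push_cast at this
  rw [this]
  norm_num

lemma pv_inv_two2 : Pv p (-1) ((2:ℚ_[p])⁻¹) := by
  by_cases h2 : p = 2
  · subst h2
    unfold Pv
    rw [norm_inv]
    have : ‖((2:ℕ):ℚ_[(2:ℕ)])‖ = ((2:ℕ):ℝ)⁻¹ := Padic.norm_p
    push_cast at this
    rw [this]
    norm_num
  · exact (pv_inv_two h2).mono (by omega)

lemma pv_inv_six : Pv p (-1) ((6:ℚ_[p])⁻¹) := by
  by_cases h2 : p = 2
  · subst h2
    unfold Pv
    rw [norm_inv, norm_six (Or.inl rfl)]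
    norm_num
  by_cases h3 : p = 3
  · subst h3
    unfold Pv
    rw [norm_inv, norm_six (Or.inr rfl)]
    norm_num
  · have h5 := prime_ge5 h2 h3
    unfold Pv
    rw [norm_inv]
    have : ‖((6:ℕ):ℚ_[p])‖ = 1 := norm_nat_eq_one_of_not_dvd (by
      intro hd
      have := Nat.le_of_dvd (by norm_num) hd
      interval_cases p
      · revert hd; decide
      · exact absurd hp.out (by norm_num))
    push_cast at this
    rw [this]
    simp
    exact_mod_cast hp.out.one_lt.le

lemma pv_inv_six' (h5 : 5 ≤ p) : Pv p 0 ((6:ℚ_[p])⁻¹) := by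
  unfold Pv
  rw [norm_inv]
  have : ‖((6:ℕ):ℚ_[p])‖ = 1 := norm_nat_eq_one_of_not_dvd (by
    intro hd
    have := Nat.le_of_dvd (by norm_num) hd
    interval_cases p
    · revert hd; decide
    · exact absurd hp.out (by norm_num))
  push_cast at this
  rw [this]
  simp

lemma sum_id (n : ℕ) : (∑ x ∈ range n, (x:ℚ_[p])) = ((n:ℚ_[p])^2 - n) * (2:ℚ_[p])⁻¹ := by
  induction n with
  | zero => simp
  | succ m ih =>
    rw [Finset.sum_range_succ, ih]
    push_cast
    have h2 : (2:ℚ_[p]) ≠ 0 := by norm_num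
    field_simp
    ring

lemma sum_sq (n : ℕ) : (∑ x ∈ range n, (x:ℚ_[p])^2) = (2*(n:ℚ_[p])^3 - 3*n^2 + n) * (6:ℚ_[p])⁻¹ := by
  have h6 : (6:ℚ_[p]) ≠ 0 := by norm_num
  induction n with
  | zero => simp
  | succ m ih =>
    rw [Finset.sum_range_succ, ih]
    push_cast
    field_simp
    ring

variable {p : ℕ} [hp : Fact p.Prime]

lemma cast_ppow (c : ℕ) : ((p^c : ℕ) : ℚ_[p]) = (p:ℚ_[p])^c := by push_cast; rfl

lemma pv_S (r b : ℕ) (hb : 1 ≤ b) : Pv p ((b:ℤ)-1) (∑ x ∈ range (p^b), (x:ℚ_[p])^r) := by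
  rw [faulhaber_p, show ((p^b : ℕ) : ℚ_[p]) = (p:ℚ_[p])^b from cast_ppow b]
  apply Pv.sum
  intro i hi
  have hir : i ≤ r := Nat.lt_succ_iff.mp (Finset.mem_range.mp hi)
  have := term_pv0 (p := p) r i (bern_pv i) hir b (r.choose i)
  apply this.mono
  have hs : (1:ℤ) ≤ ((r+1-i : ℕ):ℤ) := by
    have : 1 ≤ r + 1 - i := by omega
    exact_mod_cast this
  have hb' : (1:ℤ) ≤ (b:ℤ) := by exact_mod_cast hb
  nlinarith

lemma termB (k : ℕ) (hk : 1 ≤ k) (c r n : ℕ) (hc : 1 ≤ c) (hr : 2 ≤ r) {x : ℚ_[p]}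
    (hx : Pv p (-1) x) :
    Pv p c ((((bernoulli (2*k) / (2*k : ℚ)).den : ℕ) : ℚ_[p]) *
      (x * (n:ℚ_[p]) * ((p:ℚ_[p])^c)^r / ((r:ℕ):ℚ_[p]))) := by
  have hc' : (1:ℤ) ≤ (c:ℤ) := by exact_mod_cast hc
  have hr' : (2:ℤ) ≤ (r:ℤ) := by exact_mod_cast hr
  have hpow : Pv p ((c*r : ℕ):ℤ) (((p:ℚ_[p])^c)^r) := by
    have := Pv.ppow (p := p) (c*r)
    rwa [pow_mul] at this
  by_cases h2 : p = 2
  · subst h2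
    have hD := pv_D'_23 k hk (Or.inl rfl)
    rw [if_pos rfl] at hD
    have hcore := ((hx.mul (Pv.natCast n)).mul hpow).div (pv_inv_r1 r (by omega))
    have := hD.mul hcore
    apply this.mono
    push_cast
    nlinarith
  · have hD : Pv p 0 ((((bernoulli (2*k) / (2*k : ℚ)).den : ℕ) : ℚ_[p])) := Pv.natCast _
    have hp3 : 3 ≤ p := by
      have := hp.out.two_le
      rcases Nat.lt_or_ge p 3 with h | h
      · interval_cases p
        · exact absurd rfl h2
      · exact h
    have hcore := ((hx.mul (Pv.natCast n)).mul hpow).div (pv_inv_r2 r hr hp3)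
    have := hD.mul hcore
    apply this.mono
    push_cast
    nlinarith

lemma bp_one : Bp p 1 = -(2:ℚ_[p])⁻¹ := by
  rw [Bp, bernoulli_one]
  push_cast
  rw [neg_div, inv_eq_one_div]

-- D' * Bp 1 * (p^c) bound : Pv c
lemma pv_D_half_pow (k : ℕ) (hk : 1 ≤ k) (c : ℕ) :
    Pv p c ((((bernoulli (2*k) / (2*k : ℚ)).den : ℕ) : ℚ_[p]) * ((2:ℚ_[p])⁻¹ * (p:ℚ_[p])^c)) := by
  by_cases h2 : p = 2
  · subst h2
    have hD := pv_D'_23 k hk (Or.inl rfl)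
    rw [if_pos rfl] at hD
    have := hD.mul ((pv_inv_two2 (p := 2)).mul (Pv.ppow (p := 2) c))
    apply this.mono
    omega
  · have := (Pv.natCast (p := p) ((bernoulli (2*k) / (2*k : ℚ)).den)).mul
      ((pv_inv_two h2).mul (Pv.ppow (p := p) c))
    apply this.mono
    omega

lemma pv_DS_even (k : ℕ) (hk : 1 ≤ k) (c : ℕ) (hc : 1 ≤ c) :
    Pv p c ((((bernoulli (2*k) / (2*k : ℚ)).den : ℕ) : ℚ_[p]) *
      ∑ x ∈ range (p^c), (x:ℚ_[p])^(2*k)) := by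
  rw [faulhaber_p, show ((p^c : ℕ) : ℚ_[p]) = (p:ℚ_[p])^c from cast_ppow c]
  rw [Finset.sum_range_succ]
  rw [mul_add]
  apply Pv.add
  · rw [Finset.mul_sum]
    apply Pv.sum
    intro i hi
    have hik : i < 2*k := Finset.mem_range.mp hi
    have hr2 : 2 ≤ 2*k+1-i := by omega
    exact termB k hk c (2*k+1-i) ((2*k).choose i) hc hr2 (bern_pv i)
  · have e1 : 2*k+1-2*k = 1 := by omega
    rw [e1, Nat.choose_self, pow_one, Nat.cast_one, div_one, mul_one]
    have := (pv_D'_bern (p := p) k hk).mul (Pv.ppow (p := p) c)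
    rw [← mul_assoc]
    apply this.mono
    omega

lemma pv_DS_odd (k : ℕ) (hk : 1 ≤ k) (c : ℕ) (hc : 1 ≤ c) :
    Pv p c ((((bernoulli (2*k) / (2*k : ℚ)).den : ℕ) : ℚ_[p]) *
      ∑ x ∈ range (p^c), (x:ℚ_[p])^(2*k-1)) := by
  rw [faulhaber_p, show ((p^c : ℕ) : ℚ_[p]) = (p:ℚ_[p])^c from cast_ppow c]
  rw [Finset.sum_range_succ]
  rw [mul_add]
  apply Pv.add
  · rw [Finset.mul_sum]
    apply Pv.sum
    intro i hi
    have hik : i < 2*k-1 := Finset.mem_range.mp hi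
    have hr2 : 2 ≤ 2*k-1+1-i := by omega
    exact termB k hk c (2*k-1+1-i) ((2*k-1).choose i) hc hr2 (bern_pv i)
  · have e1 : 2*k-1+1-(2*k-1) = 1 := by omega
    rw [e1, Nat.choose_self, pow_one, Nat.cast_one, div_one, mul_one]
    rcases Nat.lt_or_ge k 2 with hk2 | hk2
    · -- k = 1
      have hk1 : k = 1 := by omega
      subst hk1
      have heq : (((bernoulli (2*1) / (2*1 : ℚ)).den : ℕ) : ℚ_[p]) * (Bp p (2*1-1) * (p:ℚ_[p])^c)
          = -((((bernoulli (2*1) / (2*1 : ℚ)).den : ℕ) : ℚ_[p]) * ((2:ℚ_[p])⁻¹ * (p:ℚ_[p])^c)) := by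
        rw [show (2*1-1 : ℕ) = 1 from rfl, bp_one]; ring
      rw [show (2 * ((1:ℕ):ℚ)) = (2*1 : ℚ) by norm_num, heq]
      exact (pv_D_half_pow (p := p) 1 (le_refl 1) c).neg
    · -- k ≥ 2 : bernoulli (2k-1) = 0
      have hodd : Odd (2*k-1) := ⟨k-1, by omega⟩
      have hzero : Bp p (2*k-1) = 0 := by
        rw [Bp, bernoulli_eq_bernoulli'_of_ne_one (by omega), bernoulli'_eq_zero_of_odd hodd (by omega)]
        norm_num
      rw [hzero, zero_mul, mul_zero]
      exact Pv.zero

variable {p : ℕ} [hp : Fact p.Prime]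

lemma pv_ppow_pow (c e : ℕ) : Pv p ((c*e : ℕ) : ℤ) (((p:ℚ_[p])^c)^e) := by
  have := Pv.ppow (p := p) (c*e)
  rwa [pow_mul] at this

lemma pv_poly2 (b : ℕ) (hb : 1 ≤ b) :
    Pv p (b:ℤ) (2*((p:ℚ_[p])^b)^3 - 3*((p:ℚ_[p])^b)^2 + (p:ℚ_[p])^b) := by
  apply Pv.add
  · apply Pv.sub
    · have := (Pv.natCast (p := p) 2).mul (pv_ppow_pow b 3)
      push_cast at this
      apply this.mono
      push_cast
      nlinarith [hb]
    · have := (Pv.natCast (p := p) 3).mul (pv_ppow_pow b 2)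
      push_cast at this
      apply this.mono
      push_cast
      nlinarith [hb]
  · exact Pv.ppow b

lemma pv_nu_D (k : ℕ) (hk : 1 ≤ k) :
    (p = 2 → Pv p 2 ((((bernoulli (2*k) / (2*k : ℚ)).den : ℕ) : ℚ_[p])))
    ∧ (p = 3 → Pv p 1 ((((bernoulli (2*k) / (2*k : ℚ)).den : ℕ) : ℚ_[p]))) := by
  constructor
  · intro h2; subst h2
    have := pv_D'_23 k hk (Or.inl rfl); rwa [if_pos rfl] at this
  · intro h3; subst h3
    have := pv_D'_23 k hk (Or.inr rfl); rwa [if_neg (by norm_num)] at this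

lemma pieceB (k a b : ℕ) (hk : 1 ≤ k) (ha : 1 ≤ a) (hb : 1 ≤ b) (i : ℕ) (hi : i < 2*k) (n : ℕ) :
    Pv p ((a:ℤ)+b) ((((bernoulli (2*k) / (2*k : ℚ)).den : ℕ) : ℚ_[p]) *
      (Bp p i * (n:ℚ_[p]) * ((p:ℚ_[p])^a)^(2*k-i) * (∑ x ∈ range (p^b), (x:ℚ_[p])^(2*k-i))
        / ((2*k-i : ℕ):ℚ_[p]))) := by
  have ha' : (1:ℤ) ≤ (a:ℤ) := by exact_mod_cast ha
  have hb' : (1:ℤ) ≤ (b:ℤ) := by exact_mod_cast hb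
  set D : ℚ_[p] := (((bernoulli (2*k) / (2*k : ℚ)).den : ℕ) : ℚ_[p]) with hD
  rcases Nat.lt_or_ge i (2*k-2) with hir | hir
  · -- r ≥ 3 generic
    set r : ℕ := 2*k - i with hrdef
    have hr3 : 3 ≤ r := by omega
    have hr' : (3:ℤ) ≤ (r:ℤ) := by exact_mod_cast hr3
    have hS := pv_S (p := p) r b hb
    have hcore0 := (((bern_pv i).mul (Pv.natCast n)).mul (pv_ppow_pow a r)).mul hS
    by_cases h2 : p = 2
    · have hDp := (pv_nu_D k hk).1 h2
      have := hDp.mul (hcore0.div (pv_inv_r1 r (by omega)))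
      apply this.mono
      push_cast
      nlinarith
    · by_cases h3 : p = 3
      · have hDp := (pv_nu_D k hk).2 h3
        have := hDp.mul (hcore0.div (pv_inv_r2 r (by omega) (by omega)))
        apply this.mono
        push_cast
        nlinarith
      · have h5 := prime_ge5 h2 h3
        have hDp : Pv p 0 D := Pv.natCast _
        have := hDp.mul (hcore0.div (pv_inv_r3 r hr3 h5))
        apply this.mono
        push_cast
        nlinarith
  · rcases Nat.lt_or_ge i (2*k-1) with hir2 | hir2
    · -- r = 2
      have hre : 2*k - i = 2 := by omega
      rw [hre]
      rw [sum_sq (p^b), cast_ppow, Nat.cast_ofNat]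
      have hpoly := pv_poly2 (p := p) b hb
      have hbase := ((bern_pv (p := p) i).mul (Pv.natCast (p := p) n)).mul (pv_ppow_pow (p := p) a 2)
      by_cases h2 : p = 2
      · have hDp := (pv_nu_D k hk).1 h2
        have hassm := hDp.mul (((hbase.mul (hpoly.mul (pv_inv_six (p := p)))).div (pv_inv_two2 (p := p))))
        apply hassm.mono
        push_cast
        nlinarith
      · have htwo := pv_inv_two (p := p) h2
        by_cases h3 : p = 3
        · have hDp := (pv_nu_D k hk).2 h3
          have hassm := hDp.mul (((hbase.mul (hpoly.mul (pv_inv_six (p := p)))).div htwo))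
          apply hassm.mono
          push_cast
          nlinarith
        · have h5 := prime_ge5 h2 h3
          have hDp : Pv p 0 D := Pv.natCast _
          have hassm := hDp.mul (((hbase.mul (hpoly.mul (pv_inv_six' (p := p) h5))).div htwo))
          apply hassm.mono
          push_cast
          nlinarith
    · -- r = 1, i = 2k-1
      have hie : i = 2*k-1 := by omega
      have hre : 2*k - i = 1 := by omega
      rw [hre]
      rcases Nat.lt_or_ge k 2 with hk2 | hk2
      · -- k = 1, i = 1
        have hk1 : k = 1 := by omega
        subst hk1
        have hi1 : i = 1 := by omega
        subst hi1
        have hL2 : Pv p (b:ℤ) (((p:ℚ_[p])^b)^2 - (p:ℚ_[p])^b) :=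
          Pv.sub ((pv_ppow_pow b 2).mono (by push_cast; omega)) (Pv.ppow b)
        have heq : D * (Bp p 1 * (n:ℚ_[p]) * ((p:ℚ_[p])^a)^1 * (∑ x ∈ range (p^b), (x:ℚ_[p])^1)
              / ((1:ℕ):ℚ_[p]))
            = -(D * ((2:ℚ_[p])⁻¹ * (n:ℚ_[p]) * ((p:ℚ_[p])^a) *
              ((((p:ℚ_[p])^b)^2 - (p:ℚ_[p])^b) * (2:ℚ_[p])⁻¹))) := by
          simp only [pow_one]
          rw [sum_id (p^b), cast_ppow, bp_one, Nat.cast_one, div_one]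
          ring
        rw [heq]
        apply Pv.neg
        by_cases h2 : p = 2
        · have hDp := (pv_nu_D 1 hk).1 h2
          have hx1 := ((pv_inv_two2 (p := p)).mul (Pv.natCast n)).mul (Pv.ppow a)
          have hx2 := hL2.mul (pv_inv_two2 (p := p))
          have hassm := hDp.mul (hx1.mul hx2)
          apply hassm.mono
          omega
        · have htwo := pv_inv_two (p := p) h2
          have hDp : Pv p 0 D := Pv.natCast _
          have hx1 := (htwo.mul (Pv.natCast n)).mul (Pv.ppow (p := p) a)
          have hx2 := hL2.mul htwo
          have hassm := hDp.mul (hx1.mul hx2)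
          apply hassm.mono
          omega
      · -- k ≥ 2 : Bp (2k-1) = 0
        have hodd : Odd (2*k-1) := ⟨k-1, by omega⟩
        have hzero : Bp p i = 0 := by
          rw [hie, Bp, bernoulli_eq_bernoulli'_of_ne_one (by omega), bernoulli'_eq_zero_of_odd hodd (by omega)]
          norm_num
        rw [hzero]
        simp only [zero_mul, mul_zero, zero_div]
        exact Pv.zero

variable {p : ℕ} [hp : Fact p.Prime]

lemma split_sum (a m j : ℕ) :
    (∑ s ∈ range (p^a), ((s : ℚ_[p]) + (j:ℚ_[p]) * ((p:ℚ_[p]))^a)^m)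
      = (∑ x ∈ range ((j+1) * p^a), (x:ℚ_[p])^m) - ∑ x ∈ range (j * p^a), (x:ℚ_[p])^m := by
  have h1 : (j+1) * p^a = j * p^a + p^a := by ring
  rw [h1]
  rw [Finset.range_eq_Ico (a := j * p^a + p^a), ← Finset.sum_Ico_consecutive (fun x : ℕ => (x:ℚ_[p])^m)
    (Nat.zero_le (j * p^a)) (Nat.le_add_right (j * p^a) (p^a))]
  rw [← Finset.range_eq_Ico]
  have h2 : (∑ x ∈ Finset.Ico (j * p^a) (j * p^a + p^a), (x:ℚ_[p])^m)
      = ∑ s ∈ range (p^a), ((s : ℚ_[p]) + (j:ℚ_[p]) * ((p:ℚ_[p]))^a)^m := by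
    rw [Finset.sum_Ico_eq_sum_range]
    have h3 : j * p^a + p^a - j * p^a = p^a := by omega
    rw [h3]
    apply Finset.sum_congr rfl
    intro s _
    push_cast
    ring_nf
  rw [h2]
  ring

lemma abel_sum (L : ℕ) (F : ℕ → ℚ_[p]) (hF0 : F 0 = 0) :
    (∑ j ∈ range L, (j:ℚ_[p]) * (F (j+1) - F j))
      = ((L:ℚ_[p]) - 1) * F L - ∑ j ∈ range L, F j := by
  set G : ℕ → ℚ_[p] := fun j => (j:ℚ_[p]) * F j - ∑ i ∈ range (j+1), F i with hG
  have hterm : ∀ j : ℕ, (j:ℚ_[p]) * (F (j+1) - F j) = G (j+1) - G j := by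
    intro j
    simp only [hG]
    rw [Finset.sum_range_succ (f := F) (n := j+1)]
    push_cast
    ring
  rw [Finset.sum_congr rfl (fun j _ => hterm j), Finset.sum_range_sub G]
  simp only [hG]
  rw [Finset.sum_range_succ (f := F) (n := L), Finset.sum_range_one]
  rw [hF0]
  push_cast
  ring

lemma main_pv (k a b : ℕ) (hk : 1 ≤ k) (ha : 1 ≤ a) (hb : 1 ≤ b) :
    Pv p ((a:ℤ)+b) ((((bernoulli (2*k) / (2*k : ℚ)).den : ℕ) : ℚ_[p]) *
      ∑ j ∈ range (p^b), ∑ s ∈ range (p^a),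
        (j:ℚ_[p]) * ((s:ℚ_[p]) + (j:ℚ_[p]) * (p:ℚ_[p])^a)^(2*k-1)) := by
  set D : ℚ_[p] := (((bernoulli (2*k) / (2*k : ℚ)).den : ℕ) : ℚ_[p]) with hDdef
  set F : ℕ → ℚ_[p] := fun j => ∑ x ∈ range (j * p^a), (x:ℚ_[p])^(2*k-1) with hFdef
  have hTT : (∑ j ∈ range (p^b), ∑ s ∈ range (p^a),
        (j:ℚ_[p]) * ((s:ℚ_[p]) + (j:ℚ_[p]) * (p:ℚ_[p])^a)^(2*k-1))
      = (((p^b : ℕ):ℚ_[p]) - 1) * F (p^b) - ∑ j ∈ range (p^b), F j := by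
    rw [← abel_sum (p^b) F (by simp [hFdef])]
    apply Finset.sum_congr rfl
    intro j _
    rw [← Finset.mul_sum]
    congr 1
    exact split_sum a (2*k-1) j
  rw [hTT, mul_sub]
  apply Pv.sub
  · -- piece A
    have hpow : p^b * p^a = p^(a+b) := by rw [pow_add]; ring
    have hDS := pv_DS_odd (p := p) k hk (a+b) (by omega)
    have hL1 : Pv p 0 (((p^b : ℕ):ℚ_[p]) - 1) := (Pv.natCast _).sub Pv.one
    have heq : D * ((((p^b : ℕ):ℚ_[p]) - 1) * F (p^b))
        = (((p^b : ℕ):ℚ_[p]) - 1) * (D * F (p^b)) := by ring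
    rw [heq]
    have hFL : F (p^b) = ∑ x ∈ range (p^(a+b)), (x:ℚ_[p])^(2*k-1) := by
      simp only [hFdef, hpow]
    rw [hFL]
    exact (hL1.mul hDS).mono (by omega)
  · -- piece B
    have hFj : ∀ j : ℕ, F j = ∑ i ∈ range (2*k-1+1),
        Bp p i * ((2*k-1).choose i : ℚ_[p]) * ((j * p^a : ℕ):ℚ_[p])^(2*k-1+1-i)
          / ((2*k-1+1-i : ℕ) : ℚ_[p]) := by
      intro j
      simp only [hFdef]
      exact faulhaber_p (j * p^a) (2*k-1)
    rw [Finset.sum_congr rfl (fun j _ => hFj j), Finset.sum_comm, Finset.mul_sum]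
    apply Pv.sum
    intro i hi
    have hik : i < 2*k := by
      have := Finset.mem_range.mp hi
      omega
    have hre : 2*k-1+1-i = 2*k-i := by omega
    have hinner : (∑ j ∈ range (p^b),
          Bp p i * ((2*k-1).choose i : ℚ_[p]) * ((j * p^a : ℕ):ℚ_[p])^(2*k-1+1-i)
            / ((2*k-1+1-i : ℕ) : ℚ_[p]))
        = Bp p i * (((2*k-1).choose i : ℕ):ℚ_[p]) * ((p:ℚ_[p])^a)^(2*k-i)
            * (∑ x ∈ range (p^b), (x:ℚ_[p])^(2*k-i)) / ((2*k-i : ℕ):ℚ_[p]) := by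
      calc (∑ j ∈ range (p^b),
          Bp p i * ((2*k-1).choose i : ℚ_[p]) * ((j * p^a : ℕ):ℚ_[p])^(2*k-1+1-i)
            / ((2*k-1+1-i : ℕ) : ℚ_[p]))
          = ∑ j ∈ range (p^b), ((j:ℚ_[p])^(2*k-i) *
            (Bp p i * (((2*k-1).choose i : ℕ):ℚ_[p]) * ((p:ℚ_[p])^a)^(2*k-i)
              / ((2*k-i : ℕ):ℚ_[p]))) := by
            apply Finset.sum_congr rfl
            intro j _
            rw [hre]
            push_cast
            ring
        _ = (∑ j ∈ range (p^b), (j:ℚ_[p])^(2*k-i)) *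
            (Bp p i * (((2*k-1).choose i : ℕ):ℚ_[p]) * ((p:ℚ_[p])^a)^(2*k-i)
              / ((2*k-i : ℕ):ℚ_[p])) := by
            rw [← Finset.sum_mul]
        _ = Bp p i * (((2*k-1).choose i : ℕ):ℚ_[p]) * ((p:ℚ_[p])^a)^(2*k-i)
            * (∑ x ∈ range (p^b), (x:ℚ_[p])^(2*k-i)) / ((2*k-i : ℕ):ℚ_[p]) := by
            ring
    rw [hinner]
    exact pieceB k a b hk ha hb i hik ((2*k-1).choose i)

end VanishHelpers

open Finset

theorem vanish1 (p : ℕ) (hp : p.Prime) (a b k : ℕ) (hk : 1 ≤ k) :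
    ((p : ℤ) ^ (a + b)) ∣
      ((bernoulli (2 * k) / (2 * k : ℚ)).den : ℤ) *
        ∑ j ∈ Finset.range (p ^ b), ∑ s ∈ Finset.range (p ^ a),
          (j : ℤ) * ((s : ℤ) + (j : ℤ) * (p : ℤ) ^ a) ^ (2 * k - 1) := by
  haveI : Fact p.Prime := ⟨hp⟩
  rcases Nat.eq_zero_or_pos b with hb0 | hb
  · -- b = 0 : sum is zero
    subst hb0
    rw [pow_zero, Finset.sum_range_one]
    simp
  · rw [← Padic.norm_int_le_pow_iff_dvd (p := p)]
    have hcast : ((((bernoulli (2 * k) / (2 * k : ℚ)).den : ℤ) *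
        ∑ j ∈ Finset.range (p ^ b), ∑ s ∈ Finset.range (p ^ a),
          (j : ℤ) * ((s : ℤ) + (j : ℤ) * (p : ℤ) ^ a) ^ (2 * k - 1) : ℤ) : ℚ_[p])
        = (((bernoulli (2 * k) / (2 * k : ℚ)).den : ℕ) : ℚ_[p]) *
            ∑ j ∈ Finset.range (p ^ b), ∑ s ∈ Finset.range (p ^ a),
              (j : ℚ_[p]) * ((s : ℚ_[p]) + (j : ℚ_[p]) * (p : ℚ_[p]) ^ a) ^ (2 * k - 1) := by
      push_cast
      ring
    rw [hcast]
    rcases Nat.eq_zero_or_pos a with ha0 | ha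
    · -- a = 0
      subst ha0
      have hE : ((((bernoulli (2 * k) / (2 * k : ℚ)).den : ℕ) : ℚ_[p]) *
            ∑ j ∈ Finset.range (p ^ b), ∑ s ∈ Finset.range (p ^ 0),
              (j : ℚ_[p]) * ((s : ℚ_[p]) + (j : ℚ_[p]) * (p : ℚ_[p]) ^ 0) ^ (2 * k - 1))
          = (((bernoulli (2 * k) / (2 * k : ℚ)).den : ℕ) : ℚ_[p]) *
              ∑ j ∈ Finset.range (p ^ b), (j : ℚ_[p]) ^ (2 * k) := by
        congr 1
        apply Finset.sum_congr rfl
        intro j _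
        rw [pow_zero, Finset.sum_range_one]
        rw [Nat.cast_zero, pow_zero, mul_one, zero_add]
        rw [← pow_succ']
        congr 1
        omega
      rw [hE]
      have := pv_DS_even (p := p) k hk b hb
      unfold Pv at this
      convert this using 2
      push_cast
      omega
    · -- a, b ≥ 1
      have := main_pv (p := p) k a b hk ha hb
      unfold Pv at this
      convert this using 2
      push_cast
      rfl
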